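/- The normalized determinant H̃(x,y) = H(x,y)/∫_D H(x,y)dy, where H(x,y) = det((2/π)·x_i/(x_i²+y_j²)), converges as all x_i → t > 0 (with x ∈ D) to (1/M_t) ∏_j (t² + y_j²)^{-n} ∏_{i<j}(y_i² - y_j²), pointwise for y ∈ D, where M_t = ∫_D ∏_j (t² + y_j²)^{-n} ∏_{i<j}(y_i² - y_j²) dy. -/

import Mathlib

open Real Finset Filter MeasureTheory Topology

lemma det_cauchy : ∀ (n : ℕ) (a b : Fin n → ℝ), (∀ i j, a i + b j ≠ 0) →
    Matrix.det (Matrix.of fun i j => (a i + b j)⁻¹) =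
      (∏ i, ∏ j ∈ Finset.Ioi i, ((a i - a j) * (b i - b j))) / ∏ i, ∏ j, (a i + b j) := by
  intro n
  induction n with
  | zero => intro a b h; simp
  | succ n ih =>
    intro a b h
    have h00 : a 0 + b 0 ≠ 0 := h 0 0
    have key : Matrix.det (Matrix.of fun i j : Fin (n+1) => (a i + b j)⁻¹) =
        Matrix.det (Matrix.of fun i j : Fin (n+1) =>
          if i = 0 then (a 0 + b j)⁻¹
          else (a i - a 0) * (b j - b 0) *
            ((a i + b 0)⁻¹ * ((a 0 + b j)⁻¹ * (a i + b j)⁻¹))) := by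
      apply Matrix.det_eq_of_forall_row_eq_smul_add_const
        (fun i => if i = 0 then 0 else (a 0 + b 0) * (a i + b 0)⁻¹) 0 (by simp)
      intro i j
      by_cases hi : i = 0
      · simp [hi]
      · have h1 : a i + b j ≠ 0 := h i j
        have h2 : a i + b 0 ≠ 0 := h i 0
        have h3 : a 0 + b j ≠ 0 := h 0 j
        simp only [Matrix.of_apply, if_neg hi, if_true]
        field_simp
        ring
    have expand : Matrix.det (Matrix.of fun i j : Fin (n+1) =>
          if i = 0 then (a 0 + b j)⁻¹
          else (a i - a 0) * (b j - b 0) *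
            ((a i + b 0)⁻¹ * ((a 0 + b j)⁻¹ * (a i + b j)⁻¹))) =
        (a 0 + b 0)⁻¹ *
          ((∏ i : Fin n, ((a i.succ - a 0) * (a i.succ + b 0)⁻¹)) *
           ((∏ j : Fin n, ((b j.succ - b 0) * (a 0 + b j.succ)⁻¹)) *
            Matrix.det (Matrix.of fun i j : Fin n => (a i.succ + b j.succ)⁻¹))) := by
      rw [Matrix.det_succ_column_zero]
      rw [Finset.sum_eq_single 0]
      · simp only [Matrix.of_apply, if_pos rfl, Fin.val_zero, pow_zero, one_mul,
          Fin.succAbove_zero]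
        congr 1
        have heq : (Matrix.of fun i j : Fin (n+1) =>
              if i = 0 then (a 0 + b j)⁻¹
              else (a i - a 0) * (b j - b 0) *
                ((a i + b 0)⁻¹ * ((a 0 + b j)⁻¹ * (a i + b j)⁻¹))).submatrix Fin.succ Fin.succ
            = Matrix.of fun i j : Fin n =>
                ((a i.succ - a 0) * (a i.succ + b 0)⁻¹) *
                (((b j.succ - b 0) * (a 0 + b j.succ)⁻¹) * (a i.succ + b j.succ)⁻¹) := by
          ext i j
          simp only [Matrix.submatrix_apply, Matrix.of_apply, if_neg (Fin.succ_ne_zero i)]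
          ring
        rw [heq, Matrix.det_mul_column (fun i : Fin n => (a i.succ - a 0) * (a i.succ + b 0)⁻¹)
            (fun i j : Fin n => ((b j.succ - b 0) * (a 0 + b j.succ)⁻¹) * (a i.succ + b j.succ)⁻¹),
          show (fun i j : Fin n => (b j.succ - b 0) * (a 0 + b j.succ)⁻¹ * (a i.succ + b j.succ)⁻¹)
            = (Matrix.of fun i j : Fin n =>
                ((b j.succ - b 0) * (a 0 + b j.succ)⁻¹) * (a i.succ + b j.succ)⁻¹) from rfl,
          Matrix.det_mul_row (fun j : Fin n => (b j.succ - b 0) * (a 0 + b j.succ)⁻¹)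
            (fun i j : Fin n => (a i.succ + b j.succ)⁻¹)]
        rfl
      · intro i _ hi
        obtain ⟨i, rfl⟩ := Fin.exists_succ_eq.2 hi
        simp [if_neg (Fin.succ_ne_zero i)]
      · simp
    rw [key, expand, ih (fun i => a i.succ) (fun j => b j.succ) (fun i j => h _ _)]
    -- now the algebra
    have hA2 : (∏ i : Fin n, (a i.succ + b 0)) ≠ 0 :=
      Finset.prod_ne_zero_iff.2 fun i _ => h _ _
    have hB2 : (∏ j : Fin n, (a 0 + b j.succ)) ≠ 0 :=
      Finset.prod_ne_zero_iff.2 fun j _ => h _ _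
    have hQ' : (∏ i : Fin n, ∏ j : Fin n, (a i.succ + b j.succ)) ≠ 0 :=
      Finset.prod_ne_zero_iff.2 fun i _ => Finset.prod_ne_zero_iff.2 fun j _ => h _ _
    have hP : (∏ i : Fin (n+1), ∏ j ∈ Finset.Ioi i, ((a i - a j) * (b i - b j))) =
        ((∏ j : Fin n, (a j.succ - a 0)) * (∏ j : Fin n, (b j.succ - b 0))) *
        (∏ i : Fin n, ∏ j ∈ Finset.Ioi i, ((a i.succ - a j.succ) * (b i.succ - b j.succ))) := by
      rw [Fin.prod_univ_succ, Fin.prod_Ioi_zero]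
      have : ∀ j : Fin n, (a 0 - a j.succ) * (b 0 - b j.succ)
          = (a j.succ - a 0) * (b j.succ - b 0) := fun j => by ring
      rw [Finset.prod_congr rfl fun j _ => this j, Finset.prod_mul_distrib]
      congr 1
      exact Finset.prod_congr rfl fun i _ => (Fin.prod_Ioi_succ (fun j => (a i.succ - a j) * (b i.succ - b j)) i)
    have hQ : (∏ i : Fin (n+1), ∏ j : Fin (n+1), (a i + b j)) =
        ((a 0 + b 0) * ∏ j : Fin n, (a 0 + b j.succ)) *
        ∏ i : Fin n, ((a i.succ + b 0) * ∏ j : Fin n, (a i.succ + b j.succ)) := by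
      rw [Fin.prod_univ_succ]
      congr 1
      · rw [Fin.prod_univ_succ]
      · exact Finset.prod_congr rfl fun i _ => by rw [Fin.prod_univ_succ]
    rw [hP, hQ, Finset.prod_mul_distrib, Finset.prod_mul_distrib, Finset.prod_mul_distrib,
      Finset.prod_inv_distrib, Finset.prod_inv_distrib]
    field_simp

lemma pair_prod {n : ℕ} (g : Fin n → ℝ) :
    (∏ i, ∏ j ∈ Finset.Ioi i, (g i * g j)) = ∏ k, g k ^ (n - 1) := by
  rw [Finset.prod_congr rfl fun i (_ : i ∈ univ) => Finset.prod_mul_distrib,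
    Finset.prod_mul_distrib]
  have h1 : (∏ i, ∏ _j ∈ Finset.Ioi i, g i) = ∏ i, g i ^ (n - 1 - (i : ℕ)) := by
    refine Finset.prod_congr rfl fun i _ => ?_
    rw [Finset.prod_const, Fin.card_Ioi]
  have h2 : (∏ i, ∏ j ∈ Finset.Ioi i, g j) = ∏ j, g j ^ (j : ℕ) := by
    rw [Finset.prod_comm' (t' := univ) (s' := fun j => Finset.Iio j) (by simp)]
    refine Finset.prod_congr rfl fun j _ => ?_
    rw [Finset.prod_const, Fin.card_Iio]
  rw [h1, h2, ← Finset.prod_mul_distrib]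
  refine Finset.prod_congr rfl fun i _ => ?_
  rw [← pow_add]
  congr 1
  omega

lemma key_bound {n : ℕ} {c : ℝ} (hc : 0 < c) (x z : Fin n → ℝ) (hx : ∀ i, c ≤ x i ^ 2) :
    |(∏ i, ∏ j ∈ Finset.Ioi i, (z i ^ 2 - z j ^ 2)) / ∏ i, ∏ j, (x i ^ 2 + z j ^ 2)|
      ≤ (∏ i : Fin n, ∏ _j ∈ Finset.Ioi i, c⁻¹) * ∏ j, (c + z j ^ 2)⁻¹ := by
  rcases Nat.eq_zero_or_pos n with hn | hn
  · subst hn; simp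
  have hQfac : ∀ j, 0 < c + z j ^ 2 := fun j => by positivity
  have hQpos : 0 < ∏ j, (c + z j ^ 2) := Finset.prod_pos fun j _ => hQfac j
  have hPfac : ∀ i j, 0 < x i ^ 2 + z j ^ 2 := fun i j =>
    lt_of_lt_of_le hc (le_add_of_le_of_nonneg (hx i) (sq_nonneg _))
  have hPpos : 0 < ∏ i, ∏ j, (x i ^ 2 + z j ^ 2) :=
    Finset.prod_pos fun i _ => Finset.prod_pos fun j _ => hPfac i j
  have hQleP : (∏ j, (c + z j ^ 2)) ^ n ≤ ∏ i, ∏ j, (x i ^ 2 + z j ^ 2) := by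
    have : (∏ j, (c + z j ^ 2)) ^ n = ∏ _i : Fin n, ∏ j, (c + z j ^ 2) := by
      rw [Finset.prod_const, Finset.card_univ, Fintype.card_fin]
    rw [this]
    refine Finset.prod_le_prod (fun i _ => le_of_lt (Finset.prod_pos fun j _ => hQfac j))
      fun i _ => Finset.prod_le_prod (fun j _ => le_of_lt (hQfac j)) fun j _ => by
        have := hx i; nlinarith [sq_nonneg (z j)]
  have hV : |∏ i, ∏ j ∈ Finset.Ioi i, (z i ^ 2 - z j ^ 2)|
      ≤ (∏ i : Fin n, ∏ _j ∈ Finset.Ioi i, c⁻¹) * ∏ k, (c + z k ^ 2) ^ (n - 1) := by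
    rw [Finset.abs_prod]
    rw [Finset.prod_congr rfl fun i (_ : i ∈ univ) => Finset.abs_prod _ _]
    have step : ∀ i : Fin n, ∀ j ∈ Finset.Ioi i, |z i ^ 2 - z j ^ 2|
        ≤ c⁻¹ * ((c + z i ^ 2) * (c + z j ^ 2)) := by
      intro i j _
      rw [abs_sub_le_iff]
      constructor <;>
      · rw [inv_mul_eq_div, le_div_iff₀ hc]
        nlinarith [sq_nonneg (z i), sq_nonneg (z j), sq_nonneg (z i * z j)]
    calc (∏ i, ∏ j ∈ Finset.Ioi i, |z i ^ 2 - z j ^ 2|)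
        ≤ ∏ i, ∏ j ∈ Finset.Ioi i, (c⁻¹ * ((c + z i ^ 2) * (c + z j ^ 2))) := by
          refine Finset.prod_le_prod (fun i _ => Finset.prod_nonneg fun j _ => abs_nonneg _)
            fun i _ => Finset.prod_le_prod (fun j _ => abs_nonneg _) (step i)
      _ = (∏ i : Fin n, ∏ _j ∈ Finset.Ioi i, c⁻¹) *
            ∏ i, ∏ j ∈ Finset.Ioi i, ((c + z i ^ 2) * (c + z j ^ 2)) := by
          rw [← Finset.prod_mul_distrib]
          exact Finset.prod_congr rfl fun i _ => Finset.prod_mul_distrib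
      _ = _ := by rw [pair_prod (fun k => c + z k ^ 2)]
  have habs : |(∏ i, ∏ j ∈ Finset.Ioi i, (z i ^ 2 - z j ^ 2)) / ∏ i, ∏ j, (x i ^ 2 + z j ^ 2)|
      = |∏ i, ∏ j ∈ Finset.Ioi i, (z i ^ 2 - z j ^ 2)| / ∏ i, ∏ j, (x i ^ 2 + z j ^ 2) := by
    rw [abs_div, abs_of_pos hPpos]
  rw [habs]
  have hCnonneg : (0:ℝ) ≤ ∏ i : Fin n, ∏ _j ∈ Finset.Ioi i, c⁻¹ :=
    Finset.prod_nonneg fun i _ => Finset.prod_nonneg fun j _ => by positivity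
  calc |∏ i, ∏ j ∈ Finset.Ioi i, (z i ^ 2 - z j ^ 2)| / ∏ i, ∏ j, (x i ^ 2 + z j ^ 2)
      ≤ ((∏ i : Fin n, ∏ _j ∈ Finset.Ioi i, c⁻¹) * ∏ k, (c + z k ^ 2) ^ (n - 1)) /
          (∏ j, (c + z j ^ 2)) ^ n :=
        div_le_div₀ (by positivity) hV (by positivity) hQleP
    _ = (∏ i : Fin n, ∏ _j ∈ Finset.Ioi i, c⁻¹) * ∏ j, (c + z j ^ 2)⁻¹ := by
        rw [Finset.prod_pow, mul_div_assoc, Finset.prod_inv_distrib]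
        congr 1
        have hpow : (∏ j, (c + z j ^ 2)) ^ n = (∏ j, (c + z j ^ 2)) ^ (n-1) * ∏ j, (c + z j ^ 2) := by
          rw [← pow_succ]
          congr 1
          omega
        rw [hpow]
        have h1 : ((∏ j, (c + z j ^ 2)) : ℝ) ^ (n-1) ≠ 0 := by positivity
        field_simp

lemma integrable_g (n : ℕ) {c : ℝ} (hc : 0 < c) :
    Integrable (fun z : Fin n → ℝ => ∏ j, (c + z j ^ 2)⁻¹) := by
  apply Integrable.fintype_prod (f := fun (_ : Fin n) (s : ℝ) => (c + s ^ 2)⁻¹)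
  intro i
  have hcont : Continuous fun s : ℝ => (c + s ^ 2)⁻¹ :=
    (continuous_const.add (continuous_id.pow 2)).inv₀ fun s => by show c + s ^ 2 ≠ 0; positivity
  refine Integrable.mono' (integrable_inv_one_add_sq.const_mul (min c 1)⁻¹)
    hcont.aestronglyMeasurable (ae_of_all _ fun s => ?_)
  rw [Real.norm_eq_abs, abs_of_pos (by positivity)]
  rw [← mul_inv]
  have h1 : (0:ℝ) < min c 1 * (1 + s ^ 2) := by positivity
  apply inv_anti₀ h1
  have h2 : min c 1 ≤ c := min_le_left _ _
  have h3 : min c 1 ≤ 1 := min_le_right _ _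
  nlinarith [sq_nonneg s]

lemma isOpen_D (n : ℕ) : IsOpen {x : Fin n → ℝ | StrictAnti x ∧ ∀ i, 0 < x i} := by
  have heq : {x : Fin n → ℝ | StrictAnti x ∧ ∀ i, 0 < x i} =
      (⋂ p : Fin n × Fin n, {x : Fin n → ℝ | p.1 < p.2 → x p.2 < x p.1}) ∩
        ⋂ i, {x : Fin n → ℝ | 0 < x i} := by
    ext x
    simp only [Set.mem_setOf_eq, Set.mem_inter_iff, Set.mem_iInter, StrictAnti, Prod.forall]
  rw [heq]
  refine IsOpen.inter (isOpen_iInter_of_finite fun p => ?_)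
    (isOpen_iInter_of_finite fun i => isOpen_lt continuous_const (continuous_apply i))
  by_cases hp : p.1 < p.2
  · have : {x : Fin n → ℝ | p.1 < p.2 → x p.2 < x p.1} = {x | x p.2 < x p.1} := by
      ext x; simp [hp]
    rw [this]
    exact isOpen_lt (continuous_apply p.2) (continuous_apply p.1)
  · have : {x : Fin n → ℝ | p.1 < p.2 → x p.2 < x p.1} = Set.univ := by
      ext x; simp [hp]
    rw [this]; exact isOpen_univ

lemma nonempty_D (n : ℕ) {t : ℝ} (ht : 0 < t) :
    Set.Nonempty {x : Fin n → ℝ | StrictAnti x ∧ ∀ i, 0 < x i} := by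
  refine ⟨fun i => t + ((n : ℝ) - (i : ℕ)), ?_, ?_⟩
  · intro a b hab
    have : ((a : ℕ) : ℝ) < (b : ℕ) := Nat.cast_lt.2 hab
    simp only
    linarith
  · intro i
    have : ((i : ℕ) : ℝ) < (n : ℝ) := Nat.cast_lt.2 i.isLt
    simp only
    linarith

lemma cont_P (n : ℕ) (y : Fin n → ℝ) :
    Continuous fun x : Fin n → ℝ => ∏ i, ∏ j, (x i ^ 2 + y j ^ 2) :=
  continuous_finset_prod _ fun i _ => continuous_finset_prod _ fun j _ =>
    (((continuous_apply i).pow 2).add continuous_const)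

lemma cont_V (n : ℕ) : Continuous fun z : Fin n → ℝ => ∏ i, ∏ j ∈ Finset.Ioi i, (z i ^ 2 - z j ^ 2) :=
  continuous_finset_prod _ fun i _ => continuous_finset_prod _ fun j _ =>
    (((continuous_apply i).pow 2).sub ((continuous_apply j).pow 2))

lemma det_hit (n : ℕ) (x : Fin n → ℝ) (hx : ∀ i, 0 < x i) (z : Fin n → ℝ) :
    Matrix.det (Matrix.of fun i j => 2 / Real.pi * x i / (x i ^ 2 + z j ^ 2)) =
      ((∏ i, (2 / Real.pi * x i)) * ∏ i, ∏ j ∈ Finset.Ioi i, (x i ^ 2 - x j ^ 2)) *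
        ((∏ i, ∏ j ∈ Finset.Ioi i, (z i ^ 2 - z j ^ 2)) / ∏ i, ∏ j, (x i ^ 2 + z j ^ 2)) := by
  have hne : ∀ i j : Fin n, x i ^ 2 + z j ^ 2 ≠ 0 := fun i j => by
    have := hx i; positivity
  have h1 : (Matrix.of fun i j : Fin n => 2 / Real.pi * x i / (x i ^ 2 + z j ^ 2)) =
      Matrix.of fun i j : Fin n => (2 / Real.pi * x i) * ((x i ^ 2 + z j ^ 2)⁻¹) := by
    ext i j
    simp only [Matrix.of_apply]
    rw [div_eq_mul_inv]
  rw [h1, Matrix.det_mul_column (fun i => 2 / Real.pi * x i) (fun i j => (x i ^ 2 + z j ^ 2)⁻¹)]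
  have hc' : (Matrix.det fun i j : Fin n => (x i ^ 2 + z j ^ 2)⁻¹) =
      (∏ i, ∏ j ∈ Finset.Ioi i, ((x i ^ 2 - x j ^ 2) * (z i ^ 2 - z j ^ 2))) /
        ∏ i, ∏ j, (x i ^ 2 + z j ^ 2) :=
    det_cauchy n (fun i => x i ^ 2) (fun j => z j ^ 2) hne
  rw [hc']
  have hsplit : (∏ i, ∏ j ∈ Finset.Ioi i, ((x i ^ 2 - x j ^ 2) * (z i ^ 2 - z j ^ 2)))
      = (∏ i, ∏ j ∈ Finset.Ioi i, (x i ^ 2 - x j ^ 2)) *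
        ∏ i, ∏ j ∈ Finset.Ioi i, (z i ^ 2 - z j ^ 2) := by
    rw [← Finset.prod_mul_distrib]
    exact Finset.prod_congr rfl fun i _ => Finset.prod_mul_distrib
  rw [hsplit]
  ring

/-- The normalized determinant of quadrant hitting densities converges, as all
starting points merge to t > 0 within the chamber D, to the Cauchy-type
ensemble density on the positive half-line. -/
theorem stmt_4 (n : ℕ) (t : ℝ) (ht : 0 < t)
    (D : Set (Fin n → ℝ)) (hD : D = {x : Fin n → ℝ | StrictAnti x ∧ ∀ i, 0 < x i})
    (y : Fin n → ℝ) (hy : y ∈ D) :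
    Tendsto
      (fun x : Fin n → ℝ =>
        Matrix.det (Matrix.of fun i j : Fin n =>
            (2 / Real.pi) * x i / ((x i) ^ 2 + (y j) ^ 2)) /
          ∫ y' in D, Matrix.det (Matrix.of fun i j : Fin n =>
            (2 / Real.pi) * x i / ((x i) ^ 2 + (y' j) ^ 2)))
      (nhdsWithin (fun _ => t) D)
      (nhds
        (((∏ j, (t ^ 2 + (y j) ^ 2) ^ (-(n : ℤ))) *
            ∏ i, ∏ j ∈ Finset.univ.filter (fun j => i < j), ((y i) ^ 2 - (y j) ^ 2)) /
          ∫ y' in D, (∏ j, (t ^ 2 + (y' j) ^ 2) ^ (-(n : ℤ))) *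
            ∏ i, ∏ j ∈ Finset.univ.filter (fun j => i < j), ((y' i) ^ 2 - (y' j) ^ 2))) := by
  subst hD
  have hfilt : ∀ i : Fin n, Finset.univ.filter (fun j => i < j) = Finset.Ioi i :=
    fun i => by ext j; simp
  simp only [hfilt]
  have hval : ∀ z : Fin n → ℝ,
      (∏ j, (t ^ 2 + z j ^ 2) ^ (-(n : ℤ))) * (∏ i, ∏ j ∈ Finset.Ioi i, (z i ^ 2 - z j ^ 2))
        = (∏ i, ∏ j ∈ Finset.Ioi i, (z i ^ 2 - z j ^ 2)) /
            ∏ i : Fin n, ∏ j, (t ^ 2 + z j ^ 2) := by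
    intro z
    have h1 : (∏ j, (t ^ 2 + z j ^ 2) ^ (-(n : ℤ)))
        = (∏ _i : Fin n, ∏ j, (t ^ 2 + z j ^ 2))⁻¹ := by
      rw [Finset.prod_const, Finset.card_univ, Fintype.card_fin, ← Finset.prod_pow]
      rw [← Finset.prod_inv_distrib]
      exact Finset.prod_congr rfl fun j _ => by rw [zpow_neg, zpow_natCast]
    rw [h1, div_eq_mul_inv, mul_comm]
  simp only [hval]
  -- notation
  have hDopen := isOpen_D n
  have hDmeas : MeasurableSet {x : Fin n → ℝ | StrictAnti x ∧ ∀ i, 0 < x i} :=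
    hDopen.measurableSet
  obtain ⟨hyanti, hypos⟩ := hy
  set Dst : Set (Fin n → ℝ) := {x : Fin n → ℝ | StrictAnti x ∧ ∀ i, 0 < x i} with hDst
  set c : ℝ := t ^ 2 / 4 with hc_def
  have hc : 0 < c := by positivity
  set C : ℝ := ∏ i : Fin n, ∏ _j ∈ Finset.Ioi i, c⁻¹ with hC_def
  -- eventual lower bound on coordinates
  have hball : ∀ᶠ x in 𝓝[Dst] (fun _ : Fin n => t), ∀ i, c ≤ x i ^ 2 := by
    have h1 : Metric.ball (fun _ : Fin n => t) (t / 2) ∈ 𝓝[Dst] (fun _ : Fin n => t) :=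
      nhdsWithin_le_nhds (Metric.ball_mem_nhds _ (by positivity))
    filter_upwards [h1] with x hx i
    have h2 : dist (x i) t ≤ dist x (fun _ : Fin n => t) := dist_le_pi_dist x (fun _ : Fin n => t) i
    have h3 : dist x (fun _ : Fin n => t) < t / 2 := Metric.mem_ball.mp hx
    rw [Real.dist_eq] at h2
    have h4 : |x i - t| < t / 2 := lt_of_le_of_lt h2 h3
    rw [abs_lt] at h4
    rw [hc_def]
    nlinarith [h4.1, h4.2]
  -- denominator integral convergence (DCT)
  have hTlow : ∀ i : Fin n, c ≤ (fun _ : Fin n => t) i ^ 2 := fun i => by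
    rw [hc_def]; nlinarith
  have hPpos : ∀ (x : Fin n → ℝ), (∀ i, c ≤ x i ^ 2) → ∀ z : Fin n → ℝ,
      0 < ∏ i, ∏ j, (x i ^ 2 + z j ^ 2) := by
    intro x hx z
    refine Finset.prod_pos fun i _ => Finset.prod_pos fun j _ => ?_
    have := hx i
    nlinarith [sq_nonneg (z j)]
  have hcontF : ∀ (x : Fin n → ℝ), (∀ i, c ≤ x i ^ 2) →
      Continuous (fun z : Fin n → ℝ =>
        (∏ i, ∏ j ∈ Finset.Ioi i, (z i ^ 2 - z j ^ 2)) / ∏ i, ∏ j, (x i ^ 2 + z j ^ 2)) := by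
    intro x hx
    refine (cont_V n).div
      (continuous_finset_prod _ fun i _ => continuous_finset_prod _ fun j _ =>
        (continuous_const.add ((continuous_apply j).pow 2))) fun z => ?_
    exact ne_of_gt (hPpos x hx z)
  have hboundInt : Integrable (fun z : Fin n → ℝ => C * ∏ j, (c + z j ^ 2)⁻¹)
      (volume.restrict Dst) :=
    ((integrable_g n hc).const_mul C).restrict
  have hI : Tendsto
      (fun x : Fin n → ℝ => ∫ y' in Dst,
        (∏ i, ∏ j ∈ Finset.Ioi i, (y' i ^ 2 - y' j ^ 2)) / ∏ i, ∏ j, (x i ^ 2 + y' j ^ 2))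
      (𝓝[Dst] (fun _ : Fin n => t))
      (𝓝 (∫ y' in Dst,
        (∏ i, ∏ j ∈ Finset.Ioi i, (y' i ^ 2 - y' j ^ 2)) / ∏ i : Fin n, ∏ j, (t ^ 2 + y' j ^ 2))) := by
    refine tendsto_integral_filter_of_dominated_convergence
      (fun z => C * ∏ j, (c + z j ^ 2)⁻¹) ?_ ?_ hboundInt ?_
    · filter_upwards [hball] with x hx
      exact ((hcontF x hx).aestronglyMeasurable).restrict
    · filter_upwards [hball] with x hx
      refine ae_of_all _ fun z => ?_
      rw [Real.norm_eq_abs]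
      exact key_bound hc x z hx
    · refine ae_of_all _ fun z => ?_
      refine Tendsto.div tendsto_const_nhds
        (((cont_P n z).tendsto _).mono_left nhdsWithin_le_nhds) ?_
      exact ne_of_gt (hPpos _ hTlow z)
  -- numerator convergence
  have hNum : Tendsto
      (fun x : Fin n → ℝ =>
        (∏ i, ∏ j ∈ Finset.Ioi i, (y i ^ 2 - y j ^ 2)) / ∏ i, ∏ j, (x i ^ 2 + y j ^ 2))
      (𝓝[Dst] (fun _ : Fin n => t))
      (𝓝 ((∏ i, ∏ j ∈ Finset.Ioi i, (y i ^ 2 - y j ^ 2)) /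
        ∏ i : Fin n, ∏ j, (t ^ 2 + y j ^ 2))) := by
    refine Tendsto.div tendsto_const_nhds
      (((cont_P n y).tendsto _).mono_left nhdsWithin_le_nhds) ?_
    exact ne_of_gt (hPpos _ hTlow y)
  -- positivity of the limiting integral
  have hM : (0:ℝ) < ∫ y' in Dst,
      (∏ i, ∏ j ∈ Finset.Ioi i, (y' i ^ 2 - y' j ^ 2)) / ∏ i : Fin n, ∏ j, (t ^ 2 + y' j ^ 2) := by
    have hfpos : ∀ z ∈ Dst, 0 <
        (∏ i, ∏ j ∈ Finset.Ioi i, (z i ^ 2 - z j ^ 2)) / ∏ i : Fin n, ∏ j, (t ^ 2 + z j ^ 2) := by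
      rintro z ⟨hzanti, hzpos⟩
      have hVpos : 0 < ∏ i, ∏ j ∈ Finset.Ioi i, (z i ^ 2 - z j ^ 2) := by
        refine Finset.prod_pos fun i _ => Finset.prod_pos fun j hj => ?_
        have hij : i < j := Finset.mem_Ioi.mp hj
        have h1 : z j < z i := hzanti hij
        have h2 : 0 < z j := hzpos j
        nlinarith
      exact div_pos hVpos (hPpos _ hTlow z)
    have hInt : IntegrableOn
        (fun z : Fin n → ℝ =>
          (∏ i, ∏ j ∈ Finset.Ioi i, (z i ^ 2 - z j ^ 2)) / ∏ i : Fin n, ∏ j, (t ^ 2 + z j ^ 2))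
        Dst := by
      refine (Integrable.mono' ((integrable_g n hc).const_mul C)
        ((hcontF _ hTlow).aestronglyMeasurable) (ae_of_all _ fun z => ?_)).integrableOn
      rw [Real.norm_eq_abs]
      exact key_bound hc _ z hTlow
    rw [setIntegral_pos_iff_support_of_nonneg_ae]
    · refine lt_of_lt_of_le (hDopen.measure_pos volume (nonempty_D n ht)) (measure_mono ?_)
      intro z hz
      exact ⟨ne_of_gt (hfpos z hz), hz⟩
    · rw [EventuallyLE, ae_restrict_iff' hDmeas]
      exact ae_of_all _ fun z hz => le_of_lt (hfpos z hz)
    · exact hInt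
  -- combine
  have hmain := hNum.div hI (ne_of_gt hM)
  refine hmain.congr' ?_
  filter_upwards [self_mem_nhdsWithin, hball] with x hx hxc
  obtain ⟨hxanti, hxpos⟩ := hx
  have hdet := det_hit n x hxpos
  simp only [hdet]
  rw [integral_const_mul]
  have hK : ((∏ i, (2 / Real.pi * x i)) * ∏ i, ∏ j ∈ Finset.Ioi i, (x i ^ 2 - x j ^ 2)) ≠ 0 := by
    have h1 : (∏ i, (2 / Real.pi * x i)) ≠ 0 :=
      Finset.prod_ne_zero_iff.2 fun i _ => by
        have := hxpos i
        have hpi := Real.pi_pos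
        positivity
    have h2 : (∏ i, ∏ j ∈ Finset.Ioi i, (x i ^ 2 - x j ^ 2)) ≠ 0 :=
      Finset.prod_ne_zero_iff.2 fun i _ => Finset.prod_ne_zero_iff.2 fun j hj => by
        have hij : i < j := Finset.mem_Ioi.mp hj
        have h1 : x j < x i := hxanti hij
        have h2 : 0 < x j := hxpos j
        nlinarith
    exact mul_ne_zero h1 h2
  rw [mul_div_mul_left _ _ hK]
  rfl
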